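/- Let H_n denote the (physicists') Hermite polynomials. Fix u > √2 real. If the sequence Q_n = H_n'(√n u)/(√n H_n(√n u)) converges to a limit q as n → ∞ (with H_n(√n u) ≠ 0 for all large n), then q = u - √(u² - 2). -/

import Mathlib

open Filter Topology

/-- The physicists' Hermite polynomials, as functions `ℝ → ℝ`:
`H₀ = 1`, `H₁ = 2x`, `H_{n+2}(x) = 2x H_{n+1}(x) - 2(n+1) H_n(x)`. -/
noncomputable def physHermite : ℕ → ℝ → ℝ
  | 0 => fun _ => 1
  | 1 => fun x => 2 * x
  | (n + 2) => fun x => 2 * x * physHermite (n + 1) x - 2 * (n + 1) * physHermite n x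

lemma physHermite_add_two (n : ℕ) (x : ℝ) :
    physHermite (n+2) x = 2*x*physHermite (n+1) x - 2*((n:ℝ)+1)*physHermite n x := rfl

noncomputable def dH : ℕ → ℝ → ℝ
  | 0 => fun _ => 0
  | (n + 1) => fun x => 2*((n:ℝ)+1)*physHermite n x

lemma hasDerivAt_physHermite_aux (n : ℕ) :
    (∀ x, HasDerivAt (physHermite n) (dH n x) x) ∧
    (∀ x, HasDerivAt (physHermite (n+1)) (dH (n+1) x) x) := by
  induction n with
  | zero =>
    constructor
    · intro x; simpa [physHermite, dH] using (hasDerivAt_const x (1:ℝ))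
    · intro x
      have : HasDerivAt (fun x : ℝ => 2*x) 2 x := by
        simpa using (hasDerivAt_id x).const_mul (2:ℝ)
      simpa [physHermite, dH] using this
  | succ n ih =>
    refine ⟨ih.2, ?_⟩
    intro x
    have h1 := ih.1 x
    have h2 := ih.2 x
    have hmul : HasDerivAt (fun y : ℝ => 2*y*physHermite (n+1) y)
        (2*physHermite (n+1) x + 2*x*dH (n+1) x) x := by
      have := ((hasDerivAt_id x).const_mul (2:ℝ)).mul h2
      exact this.congr_deriv (by simp only [id, mul_one])
    have hD : HasDerivAt (physHermite (n+2))
        (2*physHermite (n+1) x + 2*x*dH (n+1) x - 2*((n:ℝ)+1)*dH n x) x := by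
      exact hmul.sub (h1.const_mul (2*((n:ℝ)+1)))
    have hval : 2*physHermite (n+1) x + 2*x*dH (n+1) x - 2*((n:ℝ)+1)*dH n x
        = dH (n+2) x := by
      cases n with
      | zero =>
        simp [dH, physHermite]; ring
      | succ m =>
        simp only [dH, physHermite_add_two]
        push_cast
        ring
    exact hval ▸ hD

lemma hasDerivAt_physHermite (n : ℕ) (x : ℝ) :
    HasDerivAt (physHermite n) (dH n x) x := (hasDerivAt_physHermite_aux n).1 x

lemma deriv_physHermite_succ (n : ℕ) (x : ℝ) :
    deriv (physHermite (n+1)) x = 2*((n:ℝ)+1)*physHermite n x :=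
  (hasDerivAt_physHermite (n+1) x).deriv

lemma c_facts (u : ℝ) (hu : Real.sqrt 2 < u) :
    0 < u ∧ 0 < u - Real.sqrt (u^2-2) ∧ 1 < u*(u - Real.sqrt (u^2-2)) ∧
      (u - Real.sqrt (u^2-2))*(2*u-(u - Real.sqrt (u^2-2))) = 2 ∧
      (u - Real.sqrt (u^2-2))^2 < 2 := by
  have h2 : (0:ℝ) ≤ 2 := by norm_num
  have hs2 : Real.sqrt 2 ^ 2 = 2 := Real.sq_sqrt h2
  have hs2n : 0 ≤ Real.sqrt 2 := Real.sqrt_nonneg 2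
  have hu0 : 0 < u := lt_of_le_of_lt hs2n hu |>.trans_le le_rfl
  have husq : 2 < u^2 := by nlinarith
  have hw2 : Real.sqrt (u^2-2) ^ 2 = u^2-2 := Real.sq_sqrt (by linarith)
  have hw0 : 0 ≤ Real.sqrt (u^2-2) := Real.sqrt_nonneg _
  set w := Real.sqrt (u^2-2) with hw
  have hwu : w < u := by nlinarith
  have hc0 : 0 < u - w := by linarith
  have hwpos : 0 < w := Real.sqrt_pos.mpr (by linarith)
  refine ⟨hu0, hc0, ?_, by nlinarith, by nlinarith⟩
  nlinarith [sq_nonneg (u*w - (u^2-1)), mul_nonneg hu0.le hw0]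

/-- positivity and upper ratio bound invariant -/
lemma hermite_inv (u c s : ℝ) (n : ℕ)
    (hu0 : 0 < u) (hc0 : 0 < c) (hcu : 1 ≤ u*c) (hkey : c*(2*u-c) = 2)
    (hs0 : 0 < s) (hsn : s*s = (n:ℝ)) :
    ∀ k, k + 1 ≤ n → 0 < physHermite k (s*u) ∧
      2*s*physHermite k (s*u) ≤ c*physHermite (k+1) (s*u) := by
  intro k
  induction k with
  | zero =>
    intro _
    constructor
    · norm_num [physHermite]
    · show 2*s*1 ≤ c*(2*(s*u))
      nlinarith
  | succ k ih =>
    intro hk2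
    obtain ⟨h0, h1⟩ := ih (by omega)
    have hpos1 : 0 < physHermite (k+1) (s*u) := by nlinarith
    refine ⟨hpos1, ?_⟩
    have hrec := physHermite_add_two k (s*u)
    have hkn : ((k:ℝ)+1) ≤ (n:ℝ) := by exact_mod_cast Nat.le_of_succ_le hk2
    have hA2 : (c*((k:ℝ)+1)) * (2*s*physHermite k (s*u))
        ≤ (c*((k:ℝ)+1)) * (c*physHermite (k+1) (s*u)) :=
      mul_le_mul_of_nonneg_left h1 (by positivity)
    have hkc : ((k:ℝ)+1) * (c^2*physHermite (k+1) (s*u))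
        ≤ (s*s) * (c^2*physHermite (k+1) (s*u)) := by
      rw [hsn]; exact mul_le_mul_of_nonneg_right hkn (by positivity)
    have hk3 : s*s*physHermite (k+1) (s*u) * (c*(2*u-c))
        = s*s*physHermite (k+1) (s*u) * 2 := by rw [hkey]
    rw [hrec]
    rw [← mul_le_mul_iff_right₀ hs0]
    nlinarith [hA2, hkc, hk3]

lemma hermite_pos (u c s : ℝ) (n : ℕ)
    (hu0 : 0 < u) (hc0 : 0 < c) (hcu : 1 ≤ u*c) (hkey : c*(2*u-c) = 2)
    (hs0 : 0 < s) (hsn : s*s = (n:ℝ)) :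
    ∀ k, k ≤ n → 0 < physHermite k (s*u) := by
  intro k hk
  cases k with
  | zero => norm_num [physHermite]
  | succ j =>
      obtain ⟨h0, h1⟩ := hermite_inv u c s n hu0 hc0 hcu hkey hs0 hsn j hk
      nlinarith

/-- one step of the error recursion -/
lemma e_step (u c t1 t2 β : ℝ) (hc0 : 0 < c) (hkey : c*(2*u-c) = 2)
    (ht1 : 0 < t1) (ht1' : t1 ≤ c/2) (hβ0 : 0 ≤ β) (hβ1 : β ≤ 1)
    (ht2 : t2 * (2*u - 2*β*t1) = 1) :
    c/2 - t2 ≤ (c^2/2)*(c/2 - t1) + (c^3/4)*(1-β) := by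
  have hcD2 : c*(2*u - 2*β*t1) - 2 = c^2 - 2*β*c*t1 := by linear_combination hkey
  have hβt : β*t1 ≤ c/2 := by nlinarith
  have hnum0 : 0 ≤ c*(2*u - 2*β*t1) - 2 := by rw [hcD2]; nlinarith
  have hD0 : 0 < (2*u - 2*β*t1) := by nlinarith
  have hLHSeq : c/2 - t2 = (c*(2*u - 2*β*t1) - 2)/(2*(2*u - 2*β*t1)) := by
    rw [eq_div_iff (mul_pos two_pos hD0).ne']
    linear_combination (-2 : ℝ) * ht2
  have hLHS : c/2 - t2 ≤ (c/4)*(c*(2*u - 2*β*t1)-2) := by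
    rw [hLHSeq, div_le_iff₀ (by linarith : (0:ℝ) < 2*(2*u - 2*β*t1))]
    nlinarith
  have hfin : (c/4)*(c*(2*u - 2*β*t1)-2) ≤ (c^2/2)*(c/2 - t1) + (c^3/4)*(1-β) := by
    rw [hcD2]
    nlinarith [mul_nonneg (mul_nonneg (sub_nonneg.mpr hβ1)
      (by nlinarith : (0:ℝ) ≤ c - 2*t1)) (sq_nonneg c)]
  linarith

lemma t_rec (u s : ℝ) (n k : ℕ) (hs0 : 0 < s) (hsn : s*s = (n:ℝ))
    (hH1 : physHermite (k+1) (s*u) ≠ 0) (hH2 : physHermite (k+2) (s*u) ≠ 0) :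
    (s*physHermite (k+1) (s*u)/physHermite (k+2) (s*u)) *
      (2*u - 2*(((k:ℝ)+1)/(n:ℝ))*(s*physHermite k (s*u)/physHermite (k+1) (s*u))) = 1 := by
  have hn0 : (n:ℝ) ≠ 0 := by nlinarith
  have hrec := physHermite_add_two k (s*u)
  field_simp
  linear_combination (-(n:ℝ)) * hrec +
    (-(2*((k:ℝ)+1)*physHermite k (s*u))) * hsn

lemma descent (u c s : ℝ) (n m d : ℕ)
    (hu0 : 0 < u) (hc0 : 0 < c) (hcu : 1 ≤ u*c) (hkey : c*(2*u-c) = 2)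
    (hc2 : c^2 ≤ 2) (hs0 : 0 < s) (hsn : s*s = (n:ℝ)) (hnm : n = m + d + 1) :
    c/2 - s*physHermite (m+d) (s*u)/physHermite (m+d+1) (s*u)
      ≤ (c^2/2)^d * (c/2) + (d:ℝ) * ((c^3/4) * ((d:ℝ)/(n:ℝ))) := by
  have hn0 : (0:ℝ) < (n:ℝ) := by nlinarith
  have hpos := hermite_pos u c s n hu0 hc0 hcu hkey hs0 hsn
  have hub : ∀ k, k+1 ≤ n → s*physHermite k (s*u)/physHermite (k+1) (s*u) ≤ c/2 := by
    intro k hk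
    obtain ⟨h0, h1⟩ := hermite_inv u c s n hu0 hc0 hcu hkey hs0 hsn k hk
    have hp1 := hpos (k+1) hk
    rw [div_le_iff₀ hp1]
    linarith
  have htpos : ∀ k, k+1 ≤ n → 0 < s*physHermite k (s*u)/physHermite (k+1) (s*u) := by
    intro k hk
    have h0 := hpos k (by omega)
    have h1 := hpos (k+1) hk
    positivity
  have claim : ∀ j, j ≤ d →
      c/2 - s*physHermite (m+j) (s*u)/physHermite (m+j+1) (s*u)
        ≤ (c^2/2)^j * (c/2) + (j:ℝ) * ((c^3/4) * ((d:ℝ)/(n:ℝ))) := by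
    intro j
    induction j with
    | zero =>
      intro _
      have := htpos m (by omega)
      simp only [pow_zero, one_mul, Nat.cast_zero, zero_mul, add_zero, Nat.add_zero]
      linarith
    | succ j ihj =>
      intro hjd
      have ihv := ihj (by omega)
      have hH1 := hpos (m+j+1) (by omega)
      have hH2 := hpos (m+j+2) (by omega)
      have hrec1 := t_rec u s n (m+j) hs0 hsn hH1.ne' hH2.ne'
      have hβ1 : (((m+j:ℕ):ℝ)+1)/(n:ℝ) ≤ 1 := by
        rw [div_le_one hn0]
        have : ((m+j+1:ℕ):ℝ) ≤ (n:ℝ) := by exact_mod_cast (by omega : m+j+1 ≤ n)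
        push_cast at this ⊢
        linarith
      have hstep := e_step u c
        (s*physHermite (m+j) (s*u)/physHermite (m+j+1) (s*u))
        (s*physHermite (m+j+1) (s*u)/physHermite (m+j+2) (s*u))
        ((((m+j:ℕ):ℝ)+1)/(n:ℝ)) hc0 hkey
        (htpos (m+j) (by omega)) (hub (m+j) (by omega))
        (by positivity) hβ1 hrec1
      have hcast : (n:ℝ) = (m:ℝ) + (d:ℝ) + 1 := by exact_mod_cast hnm
      have h1β : 1 - (((m+j:ℕ):ℝ)+1)/(n:ℝ) ≤ (d:ℝ)/(n:ℝ) := by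
        rw [sub_le_iff_le_add, ← add_div, le_div_iff₀ hn0]
        push_cast
        have hj0 : (0:ℝ) ≤ (j:ℝ) := Nat.cast_nonneg j
        nlinarith
      have e1 : (c^2/2)*(c/2 - s*physHermite (m+j) (s*u)/physHermite (m+j+1) (s*u))
          ≤ (c^2/2)*((c^2/2)^j * (c/2) + (j:ℝ) * ((c^3/4) * ((d:ℝ)/(n:ℝ)))) :=
        mul_le_mul_of_nonneg_left ihv (by positivity)
      have e2 : (c^2/2)*((j:ℝ) * ((c^3/4) * ((d:ℝ)/(n:ℝ))))
          ≤ 1*((j:ℝ) * ((c^3/4) * ((d:ℝ)/(n:ℝ)))) :=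
        mul_le_mul_of_nonneg_right (by linarith) (by positivity)
      have e3 : (c^3/4)*(1-(((m+j:ℕ):ℝ)+1)/(n:ℝ)) ≤ (c^3/4)*((d:ℝ)/(n:ℝ)) :=
        mul_le_mul_of_nonneg_left h1β (by positivity)
      have hgoalrw : m+(j+1) = (m+j)+1 := by omega
      rw [hgoalrw, pow_succ]
      push_cast
      nlinarith [hstep, e1, e2, e3]
  have := claim d le_rfl
  exact this

lemma deriv_physHermite_pred (n : ℕ) (hn : 1 ≤ n) (x : ℝ) :
    deriv (physHermite n) x = 2*(n:ℝ)*physHermite (n-1) x := by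
  obtain ⟨m, rfl⟩ : ∃ m, n = m + 1 := ⟨n-1, by omega⟩
  rw [deriv_physHermite_succ]
  simp only [Nat.add_sub_cancel]
  push_cast
  ring

/-- If `Q_n = H_n'(√n u)/(√n H_n(√n u))` converges, its limit is `u - √(u² - 2)`. -/
theorem hermite_ratio_limit (u q : ℝ) (hu : Real.sqrt 2 < u)
    (hne : ∀ᶠ n : ℕ in atTop, physHermite n (Real.sqrt n * u) ≠ 0)
    (hconv : Tendsto
      (fun n : ℕ => deriv (physHermite n) (Real.sqrt n * u) /
        (Real.sqrt n * physHermite n (Real.sqrt n * u)))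
      atTop (𝓝 q)) :
    q = u - Real.sqrt (u ^ 2 - 2) := by
  obtain ⟨hu0, hc0, hcu, hkey, hc2⟩ := c_facts u hu
  set c := u - Real.sqrt (u^2-2) with hcdef
  have hsfacts : ∀ n : ℕ, 1 ≤ n →
      0 < Real.sqrt (n:ℝ) ∧ Real.sqrt (n:ℝ) * Real.sqrt (n:ℝ) = (n:ℝ) := by
    intro n hn
    constructor
    · exact Real.sqrt_pos.mpr (by exact_mod_cast Nat.pos_of_ne_zero (by omega))
    · exact Real.mul_self_sqrt (Nat.cast_nonneg n)
  have hQ : ∀ n : ℕ, 1 ≤ n →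
      deriv (physHermite n) (Real.sqrt (n:ℝ) * u) /
        (Real.sqrt (n:ℝ) * physHermite n (Real.sqrt (n:ℝ) * u))
      = 2 * (Real.sqrt (n:ℝ) * physHermite (n-1) (Real.sqrt (n:ℝ) * u) /
          physHermite n (Real.sqrt (n:ℝ) * u)) := by
    intro n hn
    obtain ⟨hs0, hsn⟩ := hsfacts n hn
    have hpos := hermite_pos u c (Real.sqrt (n:ℝ)) n hu0 hc0 hcu.le hkey hs0 hsn
    have hHn : 0 < physHermite n (Real.sqrt (n:ℝ) * u) := hpos n le_rfl
    rw [deriv_physHermite_pred n hn]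
    field_simp
    linear_combination (-physHermite (n-1) (Real.sqrt (n:ℝ) * u)) * hsn
  have hupper : ∀ᶠ n : ℕ in atTop,
      deriv (physHermite n) (Real.sqrt (n:ℝ) * u) /
        (Real.sqrt (n:ℝ) * physHermite n (Real.sqrt (n:ℝ) * u)) ≤ c := by
    filter_upwards [eventually_ge_atTop 1] with n hn
    obtain ⟨hs0, hsn⟩ := hsfacts n hn
    rw [hQ n hn]
    obtain ⟨m, hm⟩ : ∃ m, n = m + 1 := ⟨n-1, by omega⟩
    have hinv := hermite_inv u c (Real.sqrt (n:ℝ)) n hu0 hc0 hcu.le hkey hs0 hsn m (by omega)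
    rw [← hm] at hinv
    obtain ⟨h0, h1⟩ := hinv
    have hHn : 0 < physHermite n (Real.sqrt (n:ℝ) * u) :=
      hermite_pos u c (Real.sqrt (n:ℝ)) n hu0 hc0 hcu.le hkey hs0 hsn n le_rfl
    rw [show n - 1 = m from by omega]
    rw [mul_div_assoc'] at *
    rw [div_le_iff₀ hHn]
    nlinarith
  have hqle : q ≤ c := le_of_tendsto hconv hupper
  have hqge : c ≤ q := by
    apply le_of_forall_pos_le_add
    intro ε hε
    have hρ0 : (0:ℝ) ≤ c^2/2 := by positivity
    have hρ1 : c^2/2 < 1 := by nlinarith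
    have hpow := tendsto_pow_atTop_nhds_zero_of_lt_one hρ0 hρ1
    obtain ⟨d, hdpow⟩ :=
      (hpow.eventually (eventually_lt_nhds (show (0:ℝ) < ε/(2*c) by positivity))).exists
    obtain ⟨N2, hN2⟩ := exists_nat_ge ((d:ℝ)^2 * c^3 / ε)
    have hev : ∀ᶠ n : ℕ in atTop,
        c - ε ≤ deriv (physHermite n) (Real.sqrt (n:ℝ) * u) /
          (Real.sqrt (n:ℝ) * physHermite n (Real.sqrt (n:ℝ) * u)) := by
      filter_upwards [eventually_ge_atTop (max (d+1) N2)] with n hn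
      have hn1 : 1 ≤ n := le_trans (le_trans (Nat.le_add_left 1 d) (le_max_left _ _)) hn
      obtain ⟨hs0, hsn⟩ := hsfacts n hn1
      have hnd : d + 1 ≤ n := le_trans (le_max_left _ _) hn
      obtain ⟨m, hm⟩ : ∃ m, n = m + d + 1 := ⟨n-d-1, by omega⟩
      have hdes := descent u c (Real.sqrt (n:ℝ)) n m d hu0 hc0 hcu.le hkey hc2.le hs0 hsn hm
      rw [hQ n hn1]
      rw [show m + d = n - 1 from by omega] at hdes
      rw [show n - 1 + 1 = n from by omega] at hdes
      rw [show (c^2/2)^d * (c/2) = ((c^2/2)^d * c)/2 from by ring] at hdes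
      have hn0 : (0:ℝ) < (n:ℝ) := by exact_mod_cast hn1
      have hnN2 : ((d:ℝ)^2 * c^3 / ε) ≤ (n:ℝ) := by
        have h' : ((N2:ℕ):ℝ) ≤ (n:ℝ) := by exact_mod_cast le_trans (le_max_right _ _) hn
        linarith
      have hd2 : (d:ℝ)^2 * c^3 ≤ (n:ℝ) * ε := by
        rw [div_le_iff₀ hε] at hnN2
        linarith
      have hb2 : (d:ℝ) * ((c^3/4) * ((d:ℝ)/(n:ℝ))) ≤ ε/4 := by
        have heq : (d:ℝ) * ((c^3/4) * ((d:ℝ)/(n:ℝ))) = (d:ℝ)^2*c^3/(4*(n:ℝ)) := by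
          field_simp
        rw [heq, div_le_iff₀ (by positivity),
          show ε/4*(4*((n:ℝ))) = (n:ℝ)*ε from by ring]
        exact hd2
      have hb1 : (c^2/2)^d * c ≤ ε/2 := by
        have := mul_le_mul_of_nonneg_right hdpow.le hc0.le
        rw [div_mul_eq_mul_div, mul_comm] at this
        calc (c^2/2)^d * c ≤ ε/(2*c)*c := mul_le_mul_of_nonneg_right hdpow.le hc0.le
          _ = ε/2 := by field_simp
      linarith
    have := ge_of_tendsto hconv hev
    linarith
  linarith
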